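/- Let A be an m×m real symmetrizable matrix with m ≥ 2, let k ∈ {1,...,m}, and let B be the (m−1)×(m−1) principal submatrix of A obtained by deleting row k and column k of A. Then A and B have all eigenvalues real, and if λ_1 ≤ λ_2 ≤ ... ≤ λ_m are the eigenvalues of A and μ_1 ≤ μ_2 ≤ ... ≤ μ_{m−1} are the eigenvalues of B (each listed with multiplicity), then λ_p ≤ μ_p ≤ λ_{p+1} for every p with 1 ≤ p ≤ m−1. -/

import Mathlib

open Polynomial

section CauchyInterlaceAuxSection

open Finset Module
open scoped RealInnerProductSpace

namespace CauchyInterlaceAux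

section CharpolyLemmas

variable {R : Type*} [CommRing R] {m : Type*} [Fintype m] [DecidableEq m]

lemma charpoly_conj (P Q A : Matrix m m R) (hPQ : P * Q = 1) :
    (P * A * Q).charpoly = A.charpoly := by
  have h1 : (P * A * Q).charmatrix = P.map C * A.charmatrix * Q.map C := by
    unfold Matrix.charmatrix
    simp only [RingHom.mapMatrix_apply]
    rw [mul_sub, sub_mul]
    congr 1
    · rw [← (Matrix.scalar_commute (X : R[X]) (fun r' => Commute.all _ _) (P.map C)).eq,
        mul_assoc, ← Matrix.map_mul, hPQ, Matrix.map_one _ (map_zero C) (map_one C), mul_one]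
    · rw [Matrix.map_mul, Matrix.map_mul]
  unfold Matrix.charpoly
  rw [h1, Matrix.det_mul, Matrix.det_mul, mul_comm, ← mul_assoc, ← Matrix.det_mul,
    ← Matrix.map_mul, mul_eq_one_comm.mp hPQ, Matrix.map_one _ (map_zero C) (map_one C), Matrix.det_one, one_mul]

lemma charpoly_diagonal (d : m → R) :
    (Matrix.diagonal d).charpoly = ∏ i, (X - C (d i)) := by
  have h1 : (Matrix.diagonal d).charmatrix = Matrix.diagonal (fun i => X - C (d i)) := by
    ext i j
    by_cases h : i = j
    · subst h; simp
    · simp [h, Matrix.diagonal_apply_ne _ h]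
  rw [Matrix.charpoly, h1, Matrix.det_diagonal]


end CharpolyLemmas

lemma monotone_eq_of_prod_eq {N : ℕ} {f g : Fin N → ℝ} (hf : Monotone f) (hg : Monotone g)
    (h : ∏ i, (X - C (f i)) = ∏ i, (X - C (g i))) : f = g := by
  have key : ∀ h' : Fin N → ℝ,
      ∏ i, (X - C (h' i)) = ((Finset.univ.val.map h').map (fun a => X - C a)).prod := by
    intro h'
    rw [Multiset.map_map]
    rfl
  have h2 : (Finset.univ.val.map f) = (Finset.univ.val.map g) := by
    have := congrArg Polynomial.roots h
    rwa [key f, key g, Polynomial.roots_multiset_prod_X_sub_C,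
      Polynomial.roots_multiset_prod_X_sub_C] at this
  have huniv : (Finset.univ.val : Multiset (Fin N)) = ↑(List.finRange N) := rfl
  rw [huniv, Multiset.map_coe, Multiset.map_coe, Multiset.coe_eq_coe,
    ← List.ofFn_eq_map, ← List.ofFn_eq_map] at h2
  exact List.ofFn_injective
    (List.Perm.eq_of_sortedLE hf.sortedLE_ofFn hg.sortedLE_ofFn h2)

lemma charpoly_eq_prod_eigenvalues {N : ℕ} {S : Matrix (Fin N) (Fin N) ℝ}
    (hS : S.IsHermitian) :
    S.charpoly = ∏ i, (X - C (hS.eigenvalues i)) := by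
  have hU := (Matrix.mem_unitaryGroup_iff).mp (hS.eigenvectorUnitary).2
  have h := congrArg Matrix.charpoly hS.spectral_theorem
  rw [h, Unitary.conjStarAlgAut_apply, charpoly_conj _ _ _ hU]
  have : (RCLike.ofReal ∘ hS.eigenvalues : Fin N → ℝ) = hS.eigenvalues := by
    funext i; simp [RCLike.ofReal]
  rw [this, charpoly_diagonal]

lemma toEuclideanLin_eigen {N : ℕ} {S : Matrix (Fin N) (Fin N) ℝ} (hS : S.IsHermitian)
    (j : Fin N) :
    Matrix.toEuclideanLin S (hS.eigenvectorBasis j) =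
      hS.eigenvalues j • hS.eigenvectorBasis j := by
  have h1 := hS.mulVec_eigenvectorBasis j
  rw [Matrix.toEuclideanLin_apply]
  exact congrArg (WithLp.equiv 2 (Fin N → ℝ)).symm h1

lemma exists_orthonormalBasis {N : ℕ} {S : Matrix (Fin N) (Fin N) ℝ}
    (hS : S.IsHermitian) {f : Fin N → ℝ} (hf : Monotone f)
    (hchar : S.charpoly = ∏ i, (X - C (f i))) :
    ∃ b : OrthonormalBasis (Fin N) ℝ (EuclideanSpace ℝ (Fin N)),
      ∀ i, Matrix.toEuclideanLin S (b i) = f i • b i := by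
  set σ := Tuple.sort hS.eigenvalues with hσ
  have hg : Monotone (hS.eigenvalues ∘ σ) := Tuple.monotone_sort _
  have hprod : S.charpoly = ∏ i, (X - C ((hS.eigenvalues ∘ σ) i)) := by
    rw [charpoly_eq_prod_eigenvalues hS]
    exact (Equiv.prod_comp σ fun i => (X - C (hS.eigenvalues i))).symm
  have hfg : f = hS.eigenvalues ∘ σ :=
    monotone_eq_of_prod_eq hf hg (by rw [← hchar, ← hprod])
  refine ⟨hS.eigenvectorBasis.reindex σ.symm, fun i => ?_⟩
  rw [OrthonormalBasis.reindex_apply, Equiv.symm_symm, toEuclideanLin_eigen hS (σ i), hfg]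
  rfl


variable {N : ℕ}

abbrev Euc (N : ℕ) := EuclideanSpace ℝ (Fin N)

lemma inner_map_eq_sum (b : OrthonormalBasis (Fin N) ℝ (Euc N))
    (T : (Euc N) →ₗ[ℝ] (Euc N)) (lam : Fin N → ℝ) (hT : ∀ i, T (b i) = lam i • b i)
    (x : Euc N) : ⟪x, T x⟫ = ∑ i, lam i * (b.repr x i)^2 := by
  have hTx : T x = ∑ i, (lam i * b.repr x i) • b i := by
    conv_lhs => rw [← b.sum_repr x, map_sum]
    refine Finset.sum_congr rfl fun i _ => ?_
    rw [map_smul, hT, smul_smul, mul_comm]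
  rw [hTx, inner_sum]
  refine Finset.sum_congr rfl fun i _ => ?_
  rw [real_inner_smul_right, ← real_inner_comm, ← b.repr_apply_apply]
  ring

lemma norm_sq_eq_sum' (b : OrthonormalBasis (Fin N) ℝ (Euc N)) (x : Euc N) :
    ‖x‖^2 = ∑ i, (b.repr x i)^2 := by
  have h := inner_map_eq_sum b LinearMap.id (fun _ => 1) (fun i => by simp) x
  rw [← real_inner_self_eq_norm_sq]
  simpa using h

lemma rayleigh_le (b : OrthonormalBasis (Fin N) ℝ (Euc N))
    (T : (Euc N) →ₗ[ℝ] (Euc N)) (lam : Fin N → ℝ) (hT : ∀ i, T (b i) = lam i • b i)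
    (hmono : Monotone lam) (q : Fin N) (x : Euc N)
    (hx : ∀ j, q < j → b.repr x j = 0) :
    ⟪x, T x⟫ ≤ lam q * ‖x‖^2 := by
  rw [inner_map_eq_sum b T lam hT, norm_sq_eq_sum' b, Finset.mul_sum]
  refine Finset.sum_le_sum fun i _ => ?_
  by_cases h : i ≤ q
  · exact mul_le_mul_of_nonneg_right (hmono h) (sq_nonneg _)
  · rw [hx i (lt_of_not_ge h)]; simp

lemma rayleigh_ge (b : OrthonormalBasis (Fin N) ℝ (Euc N))
    (T : (Euc N) →ₗ[ℝ] (Euc N)) (lam : Fin N → ℝ) (hT : ∀ i, T (b i) = lam i • b i)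
    (hmono : Monotone lam) (q : Fin N) (x : Euc N)
    (hx : ∀ j, j < q → b.repr x j = 0) :
    lam q * ‖x‖^2 ≤ ⟪x, T x⟫ := by
  rw [inner_map_eq_sum b T lam hT, norm_sq_eq_sum' b, Finset.mul_sum]
  refine Finset.sum_le_sum fun i _ => ?_
  by_cases h : q ≤ i
  · exact mul_le_mul_of_nonneg_right (hmono h) (sq_nonneg _)
  · rw [hx i (lt_of_not_ge h)]; simp


variable {N : ℕ}

/-- Embedding of `ℝ^N` into `ℝ^(N+1)` inserting a zero at position `k`. -/
def embed (k : Fin (N + 1)) :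
    EuclideanSpace ℝ (Fin N) →ₗ[ℝ] EuclideanSpace ℝ (Fin (N + 1)) where
  toFun y := WithLp.toLp 2 (Fin.insertNth k 0 (WithLp.ofLp y))
  map_add' y z := by
    ext j
    rcases eq_or_ne j k with rfl | h
    · simp [Fin.insertNth_apply_same]
    · obtain ⟨i, hi⟩ := Fin.exists_succAbove_eq h
      subst hi
      simp [Fin.insertNth_apply_succAbove]
  map_smul' c y := by
    ext j
    rcases eq_or_ne j k with rfl | h
    · simp [Fin.insertNth_apply_same]
    · obtain ⟨i, hi⟩ := Fin.exists_succAbove_eq h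
      subst hi
      simp [Fin.insertNth_apply_succAbove]

lemma embed_coe (k : Fin (N + 1)) (y : EuclideanSpace ℝ (Fin N)) :
    embed k y = WithLp.toLp 2 (Fin.insertNth k 0 (WithLp.ofLp y)) := rfl

@[simp] lemma embed_apply_same (k : Fin (N + 1)) (y : EuclideanSpace ℝ (Fin N)) :
    embed k y k = 0 := by rw [embed_coe]; exact Fin.insertNth_apply_same (α := fun _ => ℝ) k 0 _

@[simp] lemma embed_apply_succAbove (k : Fin (N + 1)) (y : EuclideanSpace ℝ (Fin N)) (i : Fin N) :
    embed k y (k.succAbove i) = y i := by rw [embed_coe]; exact Fin.insertNth_apply_succAbove (α := fun _ => ℝ) k 0 _ i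

lemma embed_injective (k : Fin (N + 1)) : Function.Injective (embed k) := by
  intro y z h
  ext i
  have := congrArg (fun v => v (k.succAbove i)) h
  simpa using this

lemma inner_embed (k : Fin (N + 1)) (y z : EuclideanSpace ℝ (Fin N)) :
    ⟪embed k y, embed k z⟫ = ⟪y, z⟫ := by
  simp only [PiLp.inner_apply, RCLike.inner_apply, conj_trivial]
  rw [Fin.sum_univ_succAbove _ k]
  simp

lemma toEuclideanLin_coord {M : ℕ} (S : Matrix (Fin M) (Fin M) ℝ)
    (v : EuclideanSpace ℝ (Fin M)) (j : Fin M) :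
    Matrix.toEuclideanLin S v j = ∑ l, S j l * v l := by
  rw [Matrix.toEuclideanLin_apply]
  simp [Matrix.mulVec, dotProduct]

lemma inner_embed_matrix (k : Fin (N + 1)) (S : Matrix (Fin (N + 1)) (Fin (N + 1)) ℝ)
    (y z : EuclideanSpace ℝ (Fin N)) :
    ⟪embed k y, Matrix.toEuclideanLin S (embed k z)⟫ =
      ⟪y, Matrix.toEuclideanLin (S.submatrix k.succAbove k.succAbove) z⟫ := by
  simp only [PiLp.inner_apply, RCLike.inner_apply, conj_trivial, toEuclideanLin_coord]
  rw [Fin.sum_univ_succAbove (fun j => (∑ l, S j l * embed k z l) * (embed k y j : ℝ)) k]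
  simp only [embed_apply_same, mul_zero, zero_add, embed_apply_succAbove]
  refine Finset.sum_congr rfl fun i _ => ?_
  congr 1
  rw [Fin.sum_univ_succAbove (fun l => S (k.succAbove i) l * embed k z l) k]
  simp [Matrix.submatrix_apply]


variable {N : ℕ}

/-- membership in span of part of an orthonormal basis kills the other coordinates -/
lemma repr_eq_zero_of_mem_span {M : ℕ} (b : OrthonormalBasis (Fin M) ℝ (EuclideanSpace ℝ (Fin M)))
    {ι : Type*} [Fintype ι] (f : ι → Fin M) (x : EuclideanSpace ℝ (Fin M))
    (hx : x ∈ Submodule.span ℝ (Set.range (⇑b ∘ f)))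
    (j : Fin M) (hj : ∀ i, f i ≠ j) : b.repr x j = 0 := by
  have hle : Submodule.span ℝ (Set.range (⇑b ∘ f)) ≤
      LinearMap.ker (b.toBasis.coord j) := by
    rw [Submodule.span_le]
    rintro _ ⟨i, rfl⟩
    have hbi : (⇑b ∘ f) i = b.toBasis (f i) := by rw [OrthonormalBasis.coe_toBasis]; rfl
    rw [SetLike.mem_coe, LinearMap.mem_ker, hbi, Basis.coord_apply, Basis.repr_self]
    exact Finsupp.single_eq_of_ne' (hj i)
  have := hle hx
  rw [LinearMap.mem_ker, Basis.coord_apply] at this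
  rw [← b.coe_toBasis_repr_apply]
  exact this

lemma core (n : ℕ) (S : Matrix (Fin (n + 1)) (Fin (n + 1)) ℝ) (k : Fin (n + 1))
    (lam : Fin (n + 1) → ℝ) (hlam : Monotone lam)
    (b : OrthonormalBasis (Fin (n + 1)) ℝ (EuclideanSpace ℝ (Fin (n + 1))))
    (hb : ∀ i, Matrix.toEuclideanLin S (b i) = lam i • b i)
    (mu : Fin n → ℝ) (hmu : Monotone mu)
    (w : OrthonormalBasis (Fin n) ℝ (EuclideanSpace ℝ (Fin n)))
    (hw : ∀ i, Matrix.toEuclideanLin (S.submatrix k.succAbove k.succAbove) (w i) = mu i • w i)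
    (p : Fin n) : mu p ≤ lam p.succ := by
  have hp : (p : ℕ) < n := p.2
  -- the two families
  set u : Fin ((p : ℕ) + 2) → EuclideanSpace ℝ (Fin (n + 1)) :=
    ⇑b ∘ (fun i => Fin.castLE (by omega) i) with hu
  set v : Fin (n - (p : ℕ)) → EuclideanSpace ℝ (Fin n) :=
    ⇑w ∘ (fun i => ⟨(p : ℕ) + (i : ℕ), by omega⟩) with hv
  have hu_inj : Function.Injective fun i => (Fin.castLE (by omega : (p : ℕ) + 2 ≤ n + 1) i) :=
    fun a c h => Fin.castLE_injective _ h
  have hv_inj : Function.Injective fun i : Fin (n - (p : ℕ)) =>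
      (⟨(p : ℕ) + (i : ℕ), by omega⟩ : Fin n) := by
    intro a c h
    have := congrArg Fin.val h
    simp only [Fin.val] at this
    exact Fin.ext (by omega)
  set U : Submodule ℝ (EuclideanSpace ℝ (Fin (n + 1))) := Submodule.span ℝ (Set.range u) with hU
  set W0 : Submodule ℝ (EuclideanSpace ℝ (Fin n)) := Submodule.span ℝ (Set.range v) with hW0
  set W : Submodule ℝ (EuclideanSpace ℝ (Fin (n + 1))) := W0.map (embed k) with hW
  have hU_rank : finrank ℝ U = (p : ℕ) + 2 := by
    rw [hU, finrank_span_eq_card ((b.orthonormal.comp _ hu_inj).linearIndependent)]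
    simp
  have hW0_rank : finrank ℝ W0 = n - (p : ℕ) := by
    rw [hW0, finrank_span_eq_card ((w.orthonormal.comp _ hv_inj).linearIndependent)]
    simp
  have hW_rank : finrank ℝ W = n - (p : ℕ) := by
    rw [hW, ← hW0_rank]
    exact (Submodule.equivMapOfInjective (embed k) (embed_injective k) W0).finrank_eq.symm
  -- nontrivial intersection
  have hinf : 0 < finrank ℝ ↥(U ⊓ W) := by
    have hsum := Submodule.finrank_sup_add_finrank_inf_eq U W
    have htop : finrank ℝ ↥(U ⊔ W) ≤ n + 1 :=
      le_trans (Submodule.finrank_le _) (le_of_eq finrank_euclideanSpace_fin)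
    omega
  haveI : Nontrivial ↥(U ⊓ W) := Module.nontrivial_of_finrank_pos (R := ℝ) hinf
  obtain ⟨x, hx_ne⟩ := exists_ne (0 : ↥(U ⊓ W))
  have hxU : (x : EuclideanSpace ℝ (Fin (n + 1))) ∈ U := x.2.1
  have hxW : (x : EuclideanSpace ℝ (Fin (n + 1))) ∈ W := x.2.2
  have hx0 : (x : EuclideanSpace ℝ (Fin (n + 1))) ≠ 0 := by
    simpa [Submodule.coe_eq_zero] using hx_ne
  -- upper bound from U
  have hup : ⟪(x : EuclideanSpace ℝ (Fin (n + 1))),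
      Matrix.toEuclideanLin S x⟫ ≤ lam p.succ * ‖(x : EuclideanSpace ℝ (Fin (n + 1)))‖^2 := by
    refine rayleigh_le b _ lam hb hlam p.succ _ fun j hj => ?_
    refine repr_eq_zero_of_mem_span b _ _ hxU j fun i => ?_
    intro hij
    have h1 : ((Fin.castLE (by omega : (p : ℕ) + 2 ≤ n + 1) i) : ℕ) = (j : ℕ) :=
      congrArg Fin.val hij
    have hj' : (p : ℕ) + 1 < (j : ℕ) := by
      have h3 := hj
      rw [Fin.lt_def, Fin.val_succ] at h3
      exact h3
    simp only [Fin.coe_castLE] at h1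
    have h2 : (i : ℕ) < (p : ℕ) + 2 := i.2
    omega
  -- lower bound from W
  obtain ⟨y, hyW0, hxy⟩ := hxW
  have hylow : mu p * ‖y‖^2 ≤ ⟪y,
      Matrix.toEuclideanLin (S.submatrix k.succAbove k.succAbove) y⟫ := by
    refine rayleigh_ge w _ mu hw hmu p _ fun j hj => ?_
    refine repr_eq_zero_of_mem_span w _ _ hyW0 j fun i => ?_
    intro hij
    have := congrArg Fin.val hij
    simp only at this
    have hj' : (j : ℕ) < (p : ℕ) := hj
    omega
  have hnorm : ‖y‖^2 = ‖(x : EuclideanSpace ℝ (Fin (n + 1)))‖^2 := by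
    rw [← hxy, ← real_inner_self_eq_norm_sq, ← real_inner_self_eq_norm_sq, inner_embed]
  have hinner : ⟪(x : EuclideanSpace ℝ (Fin (n + 1))), Matrix.toEuclideanLin S x⟫ =
      ⟪y, Matrix.toEuclideanLin (S.submatrix k.succAbove k.succAbove) y⟫ := by
    rw [← hxy, inner_embed_matrix]
  -- combine
  have hxnorm : 0 < ‖(x : EuclideanSpace ℝ (Fin (n + 1)))‖^2 :=
    pow_pos (norm_pos_iff.mpr hx0) 2
  have : mu p * ‖(x : EuclideanSpace ℝ (Fin (n + 1)))‖^2 ≤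
      lam p.succ * ‖(x : EuclideanSpace ℝ (Fin (n + 1)))‖^2 := by
    calc mu p * ‖(x : EuclideanSpace ℝ (Fin (n + 1)))‖^2
        = mu p * ‖y‖^2 := by rw [hnorm]
      _ ≤ ⟪y, Matrix.toEuclideanLin (S.submatrix k.succAbove k.succAbove) y⟫ := hylow
      _ = ⟪(x : EuclideanSpace ℝ (Fin (n + 1))), Matrix.toEuclideanLin S x⟫ := hinner.symm
      _ ≤ lam p.succ * ‖(x : EuclideanSpace ℝ (Fin (n + 1)))‖^2 := hup
  exact le_of_mul_le_mul_right this hxnorm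


lemma im_eq_zero {N : ℕ} (M : Matrix (Fin N) (Fin N) ℝ) (f : Fin N → ℝ)
    (hchar : M.charpoly = ∏ i, (X - C (f i))) :
    ∀ z : ℂ, ((M.charpoly).map (algebraMap ℝ ℂ)).IsRoot z → z.im = 0 := by
  intro z hz
  rw [hchar, Polynomial.map_prod] at hz
  rw [Polynomial.IsRoot, Polynomial.eval_prod] at hz
  obtain ⟨i, -, hi⟩ := Finset.prod_eq_zero_iff.mp hz
  simp only [Polynomial.map_sub, Polynomial.map_X, Polynomial.map_C, Polynomial.eval_sub,
    Polynomial.eval_X, Polynomial.eval_C, sub_eq_zero] at hi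
  rw [hi]
  simp

end CauchyInterlaceAux

end CauchyInterlaceAuxSection

/-- A real square matrix is *symmetrizable* if some diagonal matrix with
strictly positive entries makes it symmetric by left multiplication. -/
def Matrix.Symmetrizable {n : Type*} [Fintype n] [DecidableEq n]
    (A : Matrix n n ℝ) : Prop :=
  ∃ d : n → ℝ, (∀ i, 0 < d i) ∧ (Matrix.diagonal d * A).IsSymm

/-- **Cauchy interlace theorem for symmetrizable matrices.** Let `A` be a real
symmetrizable `(n+1) × (n+1)` matrix (`n + 1 ≥ 2`) and `B` the principal
submatrix obtained by deleting row `k` and column `k`. Then all eigenvalues of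
`A` and of `B` are real, and whenever `lam`, `mu` list the eigenvalues of `A`
and `B` in increasing order with multiplicity, they interlace. -/
theorem cauchy_interlace_symmetrizable (n : ℕ) (hn : 1 ≤ n)
    (A : Matrix (Fin (n + 1)) (Fin (n + 1)) ℝ) (hA : A.Symmetrizable)
    (k : Fin (n + 1))
    (B : Matrix (Fin n) (Fin n) ℝ)
    (hB : B = A.submatrix k.succAbove k.succAbove) :
    (∀ z : ℂ, (A.charpoly.map (algebraMap ℝ ℂ)).IsRoot z → z.im = 0) ∧
    (∀ z : ℂ, (B.charpoly.map (algebraMap ℝ ℂ)).IsRoot z → z.im = 0) ∧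
    ∀ (lam : Fin (n + 1) → ℝ), Monotone lam →
      A.charpoly = ∏ i, (X - C (lam i)) →
      ∀ (mu : Fin n → ℝ), Monotone mu →
        B.charpoly = ∏ i, (X - C (mu i)) →
        ∀ p : Fin n, lam p.castSucc ≤ mu p ∧ mu p ≤ lam p.succ := by
  obtain ⟨d, hd, hsym⟩ := hA
  set e : Fin (n + 1) → ℝ := fun i => Real.sqrt (d i) with he
  have he0 : ∀ i, 0 < e i := fun i => Real.sqrt_pos.mpr (hd i)
  have hsq : ∀ i, e i * e i = d i := fun i => Real.mul_self_sqrt (hd i).le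
  have hs : ∀ i j, d j * A j i = d i * A i j := by
    intro i j
    have := congrFun (congrFun hsym.eq i) j
    simpa [Matrix.transpose_apply, Matrix.diagonal_mul] using this
  set S : Matrix (Fin (n + 1)) (Fin (n + 1)) ℝ :=
    Matrix.diagonal e * A * Matrix.diagonal (fun i => (e i)⁻¹) with hSdef
  have hentry : ∀ i j, S i j = e i * A i j * (e j)⁻¹ := fun i j => by
    rw [hSdef, Matrix.mul_diagonal, Matrix.diagonal_mul]
  have hS : S.IsHermitian := by
    ext i j
    rw [Matrix.conjTranspose_apply, star_trivial, hentry, hentry]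
    have hi := (he0 i).ne'
    have hj := (he0 j).ne'
    field_simp
    linear_combination A j i * hsq j - A i j * hsq i + hs i j
  have hPQ : Matrix.diagonal e * Matrix.diagonal (fun i => (e i)⁻¹) = 1 := by
    rw [Matrix.diagonal_mul_diagonal]
    have h1 : (fun i => e i * (e i)⁻¹) = fun _ : Fin (n+1) => (1:ℝ) :=
      funext fun i => mul_inv_cancel₀ (he0 i).ne'
    rw [h1, Matrix.diagonal_one]
  have hcharA : S.charpoly = A.charpoly := CauchyInterlaceAux.charpoly_conj _ _ _ hPQ
  set σ : Fin n → Fin (n + 1) := k.succAbove with hσ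
  have hBS : S.submatrix σ σ =
      Matrix.diagonal (fun i => e (σ i)) * B * Matrix.diagonal (fun i => (e (σ i))⁻¹) := by
    ext i j
    rw [Matrix.submatrix_apply, hentry, Matrix.mul_diagonal, Matrix.diagonal_mul, hB,
      Matrix.submatrix_apply]
  have hPQ' : Matrix.diagonal (fun i => e (σ i)) *
      Matrix.diagonal (fun i : Fin n => (e (σ i))⁻¹) = 1 := by
    rw [Matrix.diagonal_mul_diagonal]
    have h1 : (fun i => e (σ i) * (e (σ i))⁻¹) = fun _ : Fin n => (1:ℝ) :=
      funext fun i => mul_inv_cancel₀ (he0 (σ i)).ne'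
    rw [h1, Matrix.diagonal_one]
  have hcharB : (S.submatrix σ σ).charpoly = B.charpoly := by
    rw [hBS]
    exact CauchyInterlaceAux.charpoly_conj _ _ _ hPQ'
  have hSs : ∀ a b, S b a = S a b := fun a b => by
    simpa [Matrix.conjTranspose_apply] using congrFun (congrFun hS.eq a) b
  have hS' : (S.submatrix σ σ).IsHermitian := by
    ext i j
    simp [Matrix.conjTranspose_apply, Matrix.submatrix_apply, hSs]
  refine ⟨?_, ?_, ?_⟩
  · have h1 : A.charpoly = ∏ i, (X - C (hS.eigenvalues i)) := by
      rw [← hcharA]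
      exact CauchyInterlaceAux.charpoly_eq_prod_eigenvalues hS
    exact CauchyInterlaceAux.im_eq_zero A _ h1
  · have h1 : B.charpoly = ∏ i, (X - C (hS'.eigenvalues i)) := by
      rw [← hcharB]
      exact CauchyInterlaceAux.charpoly_eq_prod_eigenvalues hS'
    exact CauchyInterlaceAux.im_eq_zero B _ h1
  · intro lam hlam hlamchar mu hmu hmuchar p
    have hSchar : S.charpoly = ∏ i, (X - C (lam i)) := by rw [hcharA, hlamchar]
    have hS'char : (S.submatrix σ σ).charpoly = ∏ i, (X - C (mu i)) := by
      rw [hcharB, hmuchar]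
    obtain ⟨b, hb⟩ := CauchyInterlaceAux.exists_orthonormalBasis hS hlam hSchar
    obtain ⟨w, hw⟩ := CauchyInterlaceAux.exists_orthonormalBasis hS' hmu hS'char
    constructor
    · -- lower bound via negation
      have hlam' : Monotone (fun i : Fin (n+1) => -lam i.rev) := fun i j hij =>
        neg_le_neg (hlam (Fin.rev_le_rev.mpr hij))
      have hmu' : Monotone (fun i : Fin n => -mu i.rev) := fun i j hij =>
        neg_le_neg (hmu (Fin.rev_le_rev.mpr hij))
      have hsubneg : (-S).submatrix σ σ = -(S.submatrix σ σ) := rfl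
      have hb' : ∀ i, Matrix.toEuclideanLin (-S) ((b.reindex Fin.revPerm) i) =
          (-lam i.rev) • (b.reindex Fin.revPerm) i := by
        intro i
        simp only [OrthonormalBasis.reindex_apply, Fin.revPerm_symm, Fin.revPerm_apply]
        rw [map_neg, LinearMap.neg_apply, hb, neg_smul]
      have hw' : ∀ i, Matrix.toEuclideanLin ((-S).submatrix σ σ)
          ((w.reindex Fin.revPerm) i) = (-mu i.rev) • (w.reindex Fin.revPerm) i := by
        intro i
        rw [hsubneg]
        simp only [OrthonormalBasis.reindex_apply, Fin.revPerm_symm, Fin.revPerm_apply]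
        rw [map_neg, LinearMap.neg_apply, hw, neg_smul]
      have hCauchyInterlaceAux.core := CauchyInterlaceAux.core n (-S) k (fun i => -lam i.rev) hlam' (b.reindex Fin.revPerm) hb'
        (fun i => -mu i.rev) hmu' (w.reindex Fin.revPerm) hw' p.rev
      simp only [Fin.rev_rev, Fin.rev_succ] at hCauchyInterlaceAux.core
      linarith [hCauchyInterlaceAux.core]
    · exact CauchyInterlaceAux.core n S k lam hlam b hb mu hmu w hw p
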